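/- arXiv:math/0111093 — 4 statements merged into one kernel-verified Lean document; each statement's English description precedes it below -/
import Mathlib

section
/- Let β ∈ (0,1) be irrational with eventually periodic continued fraction expansion, i.e. there exist N ≥ 1 and ℓ ≥ 1 such that a_{n+ℓ}(β) = a_n(β) for all n ≥ N. Then the Lyapunov exponent λ(β) = lim_{n→∞} (2/n) Σ_{k=0}^{n−1} log(1/T^k(β)) exists and satisfies λ(β) ≥ 2 log((1+√5)/2). -/
open Filter Topology

/-- The Gauss map `T : [0,1] → [0,1]`, `T 0 = 0`, `T x = 1/x - ⌊1/x⌋`. -/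
noncomputable def gaussMap (x : ℝ) : ℝ := if x = 0 then 0 else 1 / x - ⌊1 / x⌋

/-- `cfa β n = a_{n+1}(β) = ⌊1 / T^n β⌋`, the partial quotients of the
continued fraction expansion of `β`. -/
noncomputable def cfa (β : ℝ) (n : ℕ) : ℤ := ⌊1 / (gaussMap^[n] β)⌋

/-- `pNum β (n+1) = p_n(β)`: the numerators of the convergents,
with `p_{-1} = 1`, `p_0 = 0`, `p_n = a_n p_{n-1} + p_{n-2}`. -/
noncomputable def pNum (β : ℝ) : ℕ → ℤ
  | 0 => 1
  | 1 => 0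
  | n + 2 => cfa β n * pNum β (n + 1) + pNum β n

/-- `qDen β (n+1) = q_n(β)`: the denominators of the convergents,
with `q_{-1} = 0`, `q_0 = 1`, `q_n = a_n q_{n-1} + q_{n-2}`. -/
noncomputable def qDen (β : ℝ) : ℕ → ℤ
  | 0 => 0
  | 1 => 1
  | n + 2 => cfa β n * qDen β (n + 1) + qDen β n

/-- The `n`-th Birkhoff average whose limit is the Lyapunov exponent of the
Gauss map at `β`:  `(2/n) ∑_{k=0}^{n-1} log (1 / T^k β)`. -/
noncomputable def lyapAvg (β : ℝ) (n : ℕ) : ℝ :=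
  (2 / (n : ℝ)) * ∑ k ∈ Finset.range n, Real.log (1 / gaussMap^[k] β)

namespace LyapAux

/-- Good numbers: irrational and in (0,1). -/
def Good (x : ℝ) : Prop := Irrational x ∧ 0 < x ∧ x < 1

lemma gaussMap_of_ne (x : ℝ) (hx : x ≠ 0) : gaussMap x = Int.fract (1/x) := by
  rw [gaussMap, if_neg hx, Int.fract]

lemma good_gauss {x : ℝ} (h : Good x) : Good (gaussMap x) := by
  obtain ⟨hirr, h0, h1⟩ := h
  have hne : x ≠ 0 := ne_of_gt h0
  rw [gaussMap_of_ne x hne]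
  have hinv : Irrational (1/x) := by
    simpa [one_div] using hirr.inv
  have hfi : Irrational (Int.fract (1/x)) := by
    simpa [Int.fract, sub_eq_add_neg] using hinv.add_intCast (-⌊1/x⌋)
  refine ⟨hfi, ?_, Int.fract_lt_one _⟩
  rcases lt_or_eq_of_le (Int.fract_nonneg (1/x)) with h | h
  · exact h
  · exact absurd h.symm (by
      intro hh
      exact hfi (by rw [hh]; exact ⟨0, by simp⟩))

lemma good_iter {x : ℝ} (h : Good x) (n : ℕ) : Good (gaussMap^[n] x) := by
  induction n with
  | zero => simpa using h
  | succ n ih => rw [Function.iterate_succ_apply']; exact good_gauss ih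

lemma one_lt_inv_of {x : ℝ} (h : Good x) : 1 < 1/x := by
  rw [lt_div_iff₀ h.2.1]; simpa using h.2.2

lemma cfa_pos {x : ℝ} (h : Good x) (n : ℕ) : 1 ≤ cfa x n := by
  have := good_iter h n
  have h1 : (1:ℝ) ≤ 1 / gaussMap^[n] x := le_of_lt (one_lt_inv_of this)
  exact Int.le_floor.2 (by exact_mod_cast h1)

/-- The key relation: `x_n * x_{n+1} = 1 - a_{n+1} x_n`. -/
lemma key {x : ℝ} (h : Good x) (n : ℕ) :
    gaussMap^[n] x * gaussMap^[n+1] x = 1 - (cfa x n : ℝ) * gaussMap^[n] x := by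
  have hg := good_iter h n
  have hne : gaussMap^[n] x ≠ 0 := ne_of_gt hg.2.1
  rw [Function.iterate_succ_apply', gaussMap_of_ne _ hne]
  unfold Int.fract
  unfold cfa
  have h2 : gaussMap^[n] x * (gaussMap^[n] x)⁻¹ = 1 := mul_inv_cancel₀ hne
  rw [one_div]
  ring_nf
  rw [h2]

lemma iter_pos {x : ℝ} (h : Good x) (n : ℕ) : 0 < gaussMap^[n] x := (good_iter h n).2.1
lemma iter_lt_one {x : ℝ} (h : Good x) (n : ℕ) : gaussMap^[n] x < 1 := (good_iter h n).2.2

lemma prod_pos {x : ℝ} (h : Good x) (n : ℕ) :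
    0 < ∏ k ∈ Finset.range n, gaussMap^[k] x :=
  Finset.prod_pos fun k _ => iter_pos h k

lemma prod_le_one {x : ℝ} (h : Good x) (n : ℕ) :
    ∏ k ∈ Finset.range n, gaussMap^[k] x ≤ 1 :=
  Finset.prod_le_one (fun k _ => le_of_lt (iter_pos h k)) fun k _ => le_of_lt (iter_lt_one h k)

/-- `q_n β - p_n = (-1)^n ∏_{k≤n} x_k`. -/
lemma prodA {x : ℝ} (h : Good x) : ∀ n : ℕ,
    (qDen x (n+1) : ℝ) * x - pNum x (n+1) = (-1)^n * ∏ k ∈ Finset.range (n+1), gaussMap^[k] x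
  | 0 => by simp [qDen, pNum]
  | 1 => by
      have hk := key h 0
      simp only [Function.iterate_zero_apply] at hk
      norm_num at hk
      simp only [qDen, pNum, Finset.prod_range_succ, Finset.prod_range_zero,
        Function.iterate_zero_apply, Function.iterate_one]
      push_cast
      linear_combination hk
  | (n+2) => by
      have ih1 := prodA h n
      have ih2 := prodA h (n+1)
      have hk := key h (n+1)
      have e1 : (qDen x (n+3) : ℝ) = cfa x (n+1) * qDen x (n+2) + qDen x (n+1) := by
        norm_num [qDen]
      have e2 : (pNum x (n+3) : ℝ) = cfa x (n+1) * pNum x (n+2) + pNum x (n+1) := by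
        norm_num [pNum]
      have p2 : ∏ k ∈ Finset.range (n+2), gaussMap^[k] x
          = (∏ k ∈ Finset.range (n+1), gaussMap^[k] x) * gaussMap^[n+1] x :=
        Finset.prod_range_succ _ _
      have p3 : ∏ k ∈ Finset.range (n+3), gaussMap^[k] x
          = (∏ k ∈ Finset.range (n+2), gaussMap^[k] x) * gaussMap^[n+2] x :=
        Finset.prod_range_succ _ _
      rw [e1, e2, p3, p2]
      rw [p2] at ih2
      linear_combination (cfa x (n+1) : ℝ) * ih2 + ih1
        - ((-1:ℝ)^n * ∏ k ∈ Finset.range (n+1), gaussMap^[k] x) * hk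

/-- determinant identity. -/
lemma det (x : ℝ) : ∀ n : ℕ,
    pNum x (n+1) * qDen x n - pNum x n * qDen x (n+1) = (-1)^(n+1)
  | 0 => by simp [pNum, qDen]
  | (n+1) => by
      have ih := det x n
      simp only [pNum, qDen]
      ring_nf
      ring_nf at ih
      linarith [ih]

lemma qDen_nonneg {x : ℝ} (h : Good x) (n : ℕ) : 0 ≤ qDen x n := by
  induction n using Nat.strong_induction_on with
  | _ n ih =>
    match n with
    | 0 => simp [qDen]
    | 1 => simp [qDen]
    | (m+2) =>
      have h1 := ih (m+1) (by omega)
      have h2 := ih m (by omega)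
      have := cfa_pos h m
      simp only [qDen]
      nlinarith

lemma fib_le_qDen {x : ℝ} (h : Good x) (n : ℕ) (hn : 1 ≤ n) : (Nat.fib n : ℤ) ≤ qDen x n := by
  induction n using Nat.strong_induction_on with
  | _ n ih =>
    match n with
    | 1 => simp [qDen]
    | 2 => simpa [qDen] using cfa_pos h 0
    | (m+3) =>
      have h1 := ih (m+2) (by omega) (by omega)
      have h2 := ih (m+1) (by omega) (by omega)
      have ha := cfa_pos h (m+1)
      have hq := qDen_nonneg h (m+2)
      have hf : Nat.fib (m+3) = Nat.fib (m+2) + Nat.fib (m+1) := by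
        rw [Nat.fib_add_two]; exact Nat.add_comm _ _
      have e : qDen x (m+3) = cfa x (m+1) * qDen x (m+2) + qDen x (m+1) := rfl
      rw [e, hf]
      push_cast
      nlinarith

/-- `∏_{k<n} x_k * q_n(x) ≤ 1` for `n ≥ 1`. -/
lemma prod_mul_qDen_le_one {x : ℝ} (h : Good x) (n : ℕ) (hn : 1 ≤ n) :
    (∏ k ∈ Finset.range n, gaussMap^[k] x) * (qDen x (n+1) : ℝ) ≤ 1 := by
  obtain ⟨m, rfl⟩ : ∃ m, n = m + 1 := ⟨n - 1, by omega⟩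
  have A1 := prodA h m
  have A2 := prodA h (m+1)
  have D := det x (m+1)
  have Dr : (pNum x (m+2) : ℝ) * qDen x (m+1) - pNum x (m+1) * qDen x (m+2) = (-1)^(m+2) := by
    exact_mod_cast congrArg (fun z : ℤ => (z : ℝ)) D
  have E : ((qDen x (m+1) : ℝ) * x - pNum x (m+1)) * qDen x (m+2)
      - ((qDen x (m+2) : ℝ) * x - pNum x (m+2)) * qDen x (m+1) = (-1)^(m+2) := by
    rw [← Dr]; ring
  rw [A1, A2] at E
  have hq1 : (0:ℝ) ≤ qDen x (m+1) := by exact_mod_cast qDen_nonneg h (m+1)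
  have hp2 : (0:ℝ) < ∏ k ∈ Finset.range (m+2), gaussMap^[k] x := prod_pos h (m+2)
  have t2 : ((-1:ℝ)^m)^2 = 1 := by
    rw [← pow_mul, mul_comm, pow_mul]; norm_num
  rw [pow_succ, pow_succ, pow_succ] at E
  norm_num at E ⊢
  rcases neg_one_pow_eq_or ℝ m with hs | hs <;> rw [hs] at E <;>
    nlinarith [E, mul_nonneg (le_of_lt hp2) hq1]

lemma prod_le_inv_fib {x : ℝ} (h : Good x) (n : ℕ) (hn : 1 ≤ n) :
    (∏ k ∈ Finset.range n, gaussMap^[k] x) ≤ 1 / (Nat.fib (n+1) : ℝ) := by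
  have h1 := prod_mul_qDen_le_one h n hn
  have h2 : (Nat.fib (n+1) : ℝ) ≤ (qDen x (n+1) : ℝ) := by
    exact_mod_cast fib_le_qDen h (n+1) (by omega)
  have hf : (0:ℝ) < (Nat.fib (n+1) : ℝ) := by
    exact_mod_cast Nat.fib_pos.2 (by omega)
  have hp := prod_pos h n
  rw [le_div_iff₀ hf]
  nlinarith

lemma cfa_shift (x : ℝ) (j k : ℕ) : cfa (gaussMap^[j] x) k = cfa x (k + j) := by
  unfold cfa
  rw [Function.iterate_add_apply]

lemma step_eq {x y : ℝ} (hx : Good x) (hy : Good y) (hc : cfa x 0 = cfa y 0) :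
    x - y = x * y * (gaussMap y - gaussMap x) := by
  have hx0 : x ≠ 0 := ne_of_gt hx.2.1
  have hy0 : y ≠ 0 := ne_of_gt hy.2.1
  have ex : gaussMap x = 1/x - (cfa x 0 : ℝ) := by
    rw [gaussMap, if_neg hx0]; unfold cfa; norm_num
  have ey : gaussMap y = 1/y - (cfa y 0 : ℝ) := by
    rw [gaussMap, if_neg hy0]; unfold cfa; norm_num
  rw [ex, ey, hc]
  field_simp
  ring

lemma dist_le {x y : ℝ} : ∀ n : ℕ, Good x → Good y → (∀ k, cfa x k = cfa y k) →
    |x - y| ≤ ∏ k ∈ Finset.range n, (gaussMap^[k] x * gaussMap^[k] y) := by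
  intro n
  induction n generalizing x y with
  | zero =>
    intro hx hy _
    simp only [Finset.range_zero, Finset.prod_empty]
    rw [abs_le]
    constructor <;> nlinarith [hx.2.1, hx.2.2, hy.2.1, hy.2.2]
  | succ n ih =>
    intro hx hy hc
    have h1 := ih (good_gauss hx) (good_gauss hy) (fun k => by
      have := hc (k+1)
      have e1 := cfa_shift x 1 k
      have e2 := cfa_shift y 1 k
      simp only [Function.iterate_one] at e1 e2
      rw [e1, e2]; exact this)
    have h2 := step_eq hx hy (hc 0)
    have habs : |x - y| = x * y * |gaussMap x - gaussMap y| := by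
      rw [h2, abs_mul, abs_sub_comm (gaussMap y)]
      rw [abs_of_pos (mul_pos hx.2.1 hy.2.1)]
    rw [habs]
    have e : ∏ k ∈ Finset.range (n+1), (gaussMap^[k] x * gaussMap^[k] y)
        = (x * y) * ∏ k ∈ Finset.range n, (gaussMap^[k+1] x * gaussMap^[k+1] y) := by
      rw [Finset.prod_range_succ']; simp [mul_comm]
    rw [e]
    have e2 : ∀ k, gaussMap^[k+1] x = gaussMap^[k] (gaussMap x) := by
      intro k; rw [Function.iterate_succ_apply]
    have e3 : ∀ k, gaussMap^[k+1] y = gaussMap^[k] (gaussMap y) := by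
      intro k; rw [Function.iterate_succ_apply]
    simp_rw [e2, e3]
    exact mul_le_mul_of_nonneg_left h1 (le_of_lt (mul_pos hx.2.1 hy.2.1))

/-- Two Good numbers with the same digit sequence are equal. -/
lemma eq_of_cfa_eq {x y : ℝ} (hx : Good x) (hy : Good y)
    (hc : ∀ k, cfa x k = cfa y k) : x = y := by
  have key : ∀ n : ℕ, 1 ≤ n → |x - y| ≤ 1 / (Nat.fib (n+1) : ℝ) := by
    intro n hn
    have h1 := dist_le n hx hy hc
    have e : ∏ k ∈ Finset.range n, (gaussMap^[k] x * gaussMap^[k] y)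
        = (∏ k ∈ Finset.range n, gaussMap^[k] x) * ∏ k ∈ Finset.range n, gaussMap^[k] y := by
      rw [Finset.prod_mul_distrib]
    rw [e] at h1
    calc |x - y| ≤ (∏ k ∈ Finset.range n, gaussMap^[k] x) * ∏ k ∈ Finset.range n, gaussMap^[k] y := h1
      _ ≤ (1 / (Nat.fib (n+1) : ℝ)) * 1 := by
          apply mul_le_mul (prod_le_inv_fib hx n hn) (prod_le_one hy n)
            (le_of_lt (prod_pos hy n)) (by positivity)
      _ = 1 / (Nat.fib (n+1) : ℝ) := by ring
  have hfib : Tendsto (fun n : ℕ => Nat.fib (n+1)) atTop atTop := by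
    apply tendsto_atTop_mono' atTop ?_ tendsto_id
    filter_upwards [eventually_ge_atTop 4] with n hn
    calc n ≤ n + 1 := Nat.le_succ n
      _ ≤ Nat.fib (n+1) := Nat.le_fib_self (by omega)
  have htend : Tendsto (fun n : ℕ => 1 / (Nat.fib (n+1) : ℝ)) atTop (𝓝 0) := by
    simp only [one_div]
    exact tendsto_inv_atTop_zero.comp (tendsto_natCast_atTop_atTop.comp hfib)
  have h0 : |x - y| ≤ 0 := ge_of_tendsto htend (eventually_atTop.2 ⟨1, key⟩)
  have h1 : |x - y| = 0 := le_antisymm h0 (abs_nonneg _)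
  have := abs_eq_zero.mp h1
  linarith

/-- Cesàro averages of an eventually periodic sequence converge to the mean
over one period. -/
lemma cesaro {g : ℕ → ℝ} {M ℓ : ℕ} (hℓ : 1 ≤ ℓ) (hg : ∀ k, M ≤ k → g (k+ℓ) = g k) :
    Tendsto (fun n => (∑ k ∈ Finset.range n, g k) / n) atTop
      (𝓝 ((∑ k ∈ Finset.range ℓ, g (M+k)) / ℓ)) := by
  set W : ℕ → ℝ := fun n => ∑ k ∈ Finset.range ℓ, g (n+k) with hW
  set S : ℝ := W M with hS
  have window : ∀ n, M ≤ n → W n = S := by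
    intro n hn
    induction n, hn using Nat.le_induction with
    | base => rfl
    | succ n hn ih =>
      have ico : ∀ m, W m = ∑ k ∈ Finset.Ico m (m+ℓ), g k := by
        intro m
        rw [Finset.sum_Ico_eq_sum_range]
        simp [hW]
      have e1 : ∑ k ∈ Finset.Ico n (n+ℓ+1), g k = (∑ k ∈ Finset.Ico n (n+ℓ), g k) + g (n+ℓ) :=
        Finset.sum_Ico_succ_top (by omega) g
      have e2 : ∑ k ∈ Finset.Ico n (n+ℓ+1), g k = g n + ∑ k ∈ Finset.Ico (n+1) (n+ℓ+1), g k :=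
        Finset.sum_eq_sum_Ico_succ_bot (by omega) g
      have e3 : n + 1 + ℓ = n + ℓ + 1 := by omega
      rw [ico, e3, ← ih, ico]
      have := hg n hn
      linarith [e1, e2, this]
  set h : ℕ → ℝ := fun n => (∑ k ∈ Finset.range n, g k) - n * (S/ℓ) with hh
  have hper : ∀ n, M ≤ n → h (n+ℓ) = h n := by
    intro n hn
    have hadd : ∑ k ∈ Finset.range (n+ℓ), g k
        = (∑ k ∈ Finset.range n, g k) + ∑ k ∈ Finset.range ℓ, g (n+k) :=
      Finset.sum_range_add g n ℓ
    have hℓ0 : (ℓ:ℝ) ≠ 0 := by positivity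
    have hw := window n hn
    simp only [hW] at hw
    simp only [hh, hadd, hw]
    push_cast
    field_simp
    ring
  set B : ℝ := ∑ j ∈ Finset.range (M+ℓ), |h j| with hB
  have hbound : ∀ n, |h n| ≤ B := by
    intro n
    induction n using Nat.strong_induction_on with
    | _ n ih =>
      by_cases hc : n < M + ℓ
      · exact Finset.single_le_sum (f := fun j => |h j|) (fun j _ => abs_nonneg _)
          (Finset.mem_range.2 hc)
      · have h1 : M ≤ n - ℓ := by omega
        have h2 : n - ℓ + ℓ = n := by omega
        have e := hper (n - ℓ) h1
        rw [h2] at e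
        rw [e]
        exact ih (n - ℓ) (by omega)
  have hzero : Tendsto (fun n : ℕ => h n / n) atTop (𝓝 0) := by
    apply squeeze_zero_norm (a := fun n : ℕ => B / n) ?_
      (tendsto_const_div_atTop_nhds_zero_nat B)
    intro n
    rcases Nat.eq_zero_or_pos n with rfl | hn
    · simp
    · have hn0 : (0:ℝ) < n := by exact_mod_cast hn
      rw [norm_div, Real.norm_natCast, Real.norm_eq_abs]
      exact (div_le_div_iff_of_pos_right hn0).2 (hbound n)
  have main : Tendsto (fun n : ℕ => S/ℓ + h n / n) atTop (𝓝 (S/ℓ + 0)) :=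
    tendsto_const_nhds.add hzero
  have heq : (fun n : ℕ => (∑ k ∈ Finset.range n, g k) / n)
      =ᶠ[atTop] fun n : ℕ => S/ℓ + h n / n := by
    filter_upwards [eventually_ge_atTop 1] with n hn
    have hn0 : (n:ℝ) ≠ 0 := by positivity
    simp only [hh]
    field_simp
    ring
  rw [tendsto_congr' heq]
  simpa [hS, hW] using main

open goldenRatio in
/-- Binet lower bound for Fibonacci numbers. -/
lemma binet_lower (n : ℕ) : (Real.goldenRatio^n - 1) / Real.sqrt 5 ≤ (Nat.fib n : ℝ) := by
  rw [Real.coe_fib_eq]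
  have h5 : (0:ℝ) < Real.sqrt 5 := Real.sqrt_pos.mpr (by norm_num)
  have habs : |Real.goldenConj| < 1 := by
    rw [abs_lt]
    constructor
    · exact Real.neg_one_lt_goldenConj
    · linarith [Real.goldenConj_neg]
  have hpow : Real.goldenConj^n ≤ 1 := by
    calc Real.goldenConj^n ≤ |Real.goldenConj^n| := le_abs_self _
      _ = |Real.goldenConj|^n := abs_pow _ _
      _ ≤ 1 := pow_le_one₀ (abs_nonneg _) (le_of_lt habs)
  have h' : Real.goldenRatio^n - 1 ≤ Real.goldenRatio^n - Real.goldenConj^n := by linarith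
  exact div_le_div_of_nonneg_right h' h5.le |>.trans (le_refl _)

end LyapAux

open LyapAux in
/-- If `β ∈ (0,1)` is irrational with eventually periodic continued fraction
expansion (`a_{n+ℓ}(β) = a_n(β)` for all `n ≥ N`, where `a_n(β) = cfa β (n-1)`),
then the Lyapunov exponent exists and is at least `2 log((1+√5)/2)`. -/
theorem lyapunov_of_eventually_periodic (β : ℝ) (hβ : Irrational β)
    (h0 : 0 < β) (h1 : β < 1)
    (N ℓ : ℕ) (hN : 1 ≤ N) (hℓ : 1 ≤ ℓ)
    (hper : ∀ n : ℕ, N ≤ n → cfa β (n - 1 + ℓ) = cfa β (n - 1)) :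
    ∃ l : ℝ, Tendsto (lyapAvg β) atTop (𝓝 l) ∧
      2 * Real.log ((1 + Real.sqrt 5) / 2) ≤ l := by
  have hβg : Good β := ⟨hβ, h0, h1⟩
  set M : ℕ := N - 1 with hM
  -- digit periodicity from index M
  have hper' : ∀ m : ℕ, M ≤ m → cfa β (m + ℓ) = cfa β m := by
    intro m hm
    have := hper (m+1) (by omega)
    simpa using this
  -- the periodic point y
  set y : ℝ := gaussMap^[M] β with hy
  have hyg : Good y := good_iter hβg M
  have hzg : Good (gaussMap^[ℓ] y) := good_iter hyg ℓ
  have hzy : gaussMap^[ℓ] y = y := by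
    apply eq_of_cfa_eq hzg hyg
    intro k
    have e1 : gaussMap^[ℓ] y = gaussMap^[ℓ + M] β := by
      rw [hy, ← Function.iterate_add_apply]
    rw [e1, cfa_shift β (ℓ + M) k, cfa_shift β M k]
    have : k + (ℓ + M) = (k + M) + ℓ := by omega
    rw [this]
    exact hper' (k + M) (by omega)
  -- iterates of y are periodic
  have hyper : ∀ k, gaussMap^[k + ℓ] y = gaussMap^[k] y := by
    intro k
    rw [Function.iterate_add_apply, hzy]
  -- iterates of β are eventually periodic
  have hβper : ∀ k, M ≤ k → gaussMap^[k + ℓ] β = gaussMap^[k] β := by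
    intro k hk
    obtain ⟨j, rfl⟩ : ∃ j, k = j + M := ⟨k - M, by omega⟩
    have e1 : gaussMap^[j + M] β = gaussMap^[j] y := by
      rw [hy, ← Function.iterate_add_apply]
    have e2 : gaussMap^[j + M + ℓ] β = gaussMap^[j + ℓ] y := by
      rw [hy, ← Function.iterate_add_apply]
      congr 1
      omega
    rw [e1, e2, hyper]
  -- the log sequence
  set g : ℕ → ℝ := fun k => Real.log (1 / gaussMap^[k] β) with hg
  have hgper : ∀ k, M ≤ k → g (k + ℓ) = g k := by
    intro k hk
    simp only [hg, hβper k hk]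
  -- Cesàro convergence
  have hces := cesaro hℓ hgper
  set S : ℝ := ∑ k ∈ Finset.range ℓ, g (M + k) with hS
  refine ⟨2 * (S / ℓ), ?_, ?_⟩
  · have : lyapAvg β = fun n : ℕ => 2 * ((∑ k ∈ Finset.range n, g k) / n) := by
      funext n
      simp only [lyapAvg, hg]
      ring
    rw [this]
    exact hces.const_mul 2
  · -- lower bound via the product over one period
    set P : ℝ := ∏ k ∈ Finset.range ℓ, gaussMap^[k] y with hP
    have hPpos : 0 < P := prod_pos hyg ℓ
    have hiter_eq : ∀ k, gaussMap^[M + k] β = gaussMap^[k] y := by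
      intro k
      rw [hy, ← Function.iterate_add_apply]
      congr 1
      omega
    have hSP : S = - Real.log P := by
      rw [hS, hP, Real.log_prod (fun k _ => ne_of_gt (iter_pos hyg k)),
        ← Finset.sum_neg_distrib]
      apply Finset.sum_congr rfl
      intro k _
      rw [hg]
      simp only [hiter_eq k, one_div, Real.log_inv]
    -- iterates are fully periodic
    have hyperm : ∀ m k : ℕ, gaussMap^[m * ℓ + k] y = gaussMap^[k] y := by
      intro m
      induction m with
      | zero => intro k; simp
      | succ m ihm =>
        intro k
        have e2 : (m+1) * ℓ + k = (m * ℓ + k) + ℓ := by ring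
        rw [e2, hyper (m * ℓ + k), ihm]
    -- iterated products give powers of P
    have hprodpow : ∀ m : ℕ, ∏ k ∈ Finset.range (m * ℓ), gaussMap^[k] y = P ^ m := by
      intro m
      induction m with
      | zero => simp
      | succ m ih =>
        have e : (m+1) * ℓ = m * ℓ + ℓ := by ring
        rw [e, Finset.prod_range_add, ih]
        congr 1
        rw [hP]
        exact Finset.prod_congr rfl fun k _ => hyperm m k
    -- P ≤ φ^{-ℓ}
    open goldenRatio in
    have hφ1 : (1:ℝ) < Real.goldenRatio := Real.one_lt_goldenRatio
    have hPφ : P * Real.goldenRatio ^ ℓ ≤ 1 := by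
      by_contra hcon
      push_neg at hcon
      have hc1 : 1 < P * Real.goldenRatio ^ ℓ := hcon
      have hgrow : Tendsto (fun m : ℕ => (P * Real.goldenRatio ^ ℓ) ^ m) atTop atTop :=
        tendsto_pow_atTop_atTop_of_one_lt hc1
      have hbd : ∀ m : ℕ, 1 ≤ m → (P * Real.goldenRatio ^ ℓ) ^ m ≤ (Real.sqrt 5 + 1) := by
        intro m hm
        have h5 : (0:ℝ) < Real.sqrt 5 := Real.sqrt_pos.mpr (by norm_num)
        have hmℓ : 1 ≤ m * ℓ := Nat.one_le_iff_ne_zero.2 (by positivity)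
        have hA := prod_le_inv_fib hyg (m * ℓ) hmℓ
        rw [hprodpow m] at hA
        have hfib : (Real.goldenRatio ^ (m * ℓ + 1) - 1) / Real.sqrt 5 ≤ (Nat.fib (m * ℓ + 1) : ℝ) :=
          binet_lower (m * ℓ + 1)
        have hfibpos : (0:ℝ) < (Nat.fib (m * ℓ + 1) : ℝ) := by
          exact_mod_cast Nat.fib_pos.2 (by omega)
        -- P^m * fib ≤ 1
        have h2 : P ^ m * (Nat.fib (m * ℓ + 1) : ℝ) ≤ 1 := by
          rw [le_div_iff₀ hfibpos] at hA
          linarith [hA]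
        have hPm : 0 < P ^ m := pow_pos hPpos m
        have hfib' : Real.goldenRatio ^ (m * ℓ + 1) - 1 ≤ Real.sqrt 5 * (Nat.fib (m * ℓ + 1) : ℝ) := by
          rw [div_le_iff₀ h5] at hfib
          linarith [hfib]
        -- so P^m φ^{mℓ+1} ≤ √5 + P^m ≤ √5 + 1
        have h4 : P ^ m * Real.goldenRatio ^ (m * ℓ + 1) ≤ Real.sqrt 5 + P ^ m := by
          have t1 := mul_le_mul_of_nonneg_left hfib' hPm.le
          have t2 := mul_le_mul_of_nonneg_left h2 h5.le
          nlinarith [t1, t2]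
        have hP1 : P ≤ 1 := by
          have := prod_le_one hyg ℓ
          rw [← hP] at this
          exact this
        have hPm1 : P ^ m ≤ 1 := pow_le_one₀ (le_of_lt hPpos) hP1
        have h5' : P ^ m * Real.goldenRatio ^ (m * ℓ + 1) ≤ Real.sqrt 5 + 1 := by linarith
        have e : (P * Real.goldenRatio ^ ℓ) ^ m * Real.goldenRatio = P ^ m * Real.goldenRatio ^ (m * ℓ + 1) := by
          rw [mul_pow, ← pow_mul, pow_succ]
          ring_nf
        have hφpos : 0 < Real.goldenRatio := Real.goldenRatio_pos
        calc (P * Real.goldenRatio ^ ℓ) ^ m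
            ≤ (P * Real.goldenRatio ^ ℓ) ^ m * Real.goldenRatio := by nlinarith [pow_pos (mul_pos hPpos (pow_pos hφpos ℓ)) m]
          _ = P ^ m * Real.goldenRatio ^ (m * ℓ + 1) := e
          _ ≤ Real.sqrt 5 + 1 := h5'
      obtain ⟨m, hm1, hm2⟩ := ((hgrow.eventually_gt_atTop (Real.sqrt 5 + 1)).and
        (eventually_ge_atTop 1)).exists
      exact absurd (hbd m hm2) (not_le.2 hm1)
    -- conclude
    have hlogP : Real.log P + ℓ * Real.log Real.goldenRatio ≤ 0 := by
      have hpos : 0 < P * Real.goldenRatio ^ ℓ := mul_pos hPpos (pow_pos Real.goldenRatio_pos ℓ)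
      have := Real.log_le_log (by positivity) hPφ
      rw [Real.log_mul (ne_of_gt hPpos) (by positivity), Real.log_pow, Real.log_one] at this
      push_cast at this
      linarith
    have hℓpos : (0:ℝ) < ℓ := by exact_mod_cast hℓ
    have hSbound : Real.log Real.goldenRatio ≤ S / ℓ := by
      rw [hSP]
      rw [le_div_iff₀ hℓpos]
      nlinarith [hlogP]
    have : Real.log ((1 + Real.sqrt 5) / 2) = Real.log Real.goldenRatio := by
      norm_num [Real.goldenRatio]
    rw [this]
    linarith [hSbound]
end

section
/- Let β ∈ (0,1) be irrational and n ≥ 1. Let y_n be the intersection point of the vertical geodesic {z ∈ ℍ : Re z = β} with the semicircular geodesic in the upper half plane with endpoints p_{n−1}(β)/q_{n−1}(β) and p_n(β)/q_n(β); explicitly, Im y_n = √(r² − (β − c)²) with c = (p_{n−1}/q_{n−1} + p_n/q_n)/2 and r = 1/(2 q_{n−1}(β) q_n(β)), this intersection being nonempty since β lies strictly between the two consecutive convergents. Then 1/(2 q_n(β) q_{n+1}(β)) < Im y_n < 1/(2 q_{n−1}(β) q_n(β)). -/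
open Filter Topology

lemma gauss_step {x : ℝ} (hx : Irrational x) (h0 : 0 < x) :
    Irrational (gaussMap x) ∧ 0 < gaussMap x ∧ gaussMap x < 1 := by
  have hne : x ≠ 0 := ne_of_gt h0
  have hinv : Irrational (1 / x) := by rw [one_div]; exact hx.inv
  have heq : gaussMap x = Int.fract (1 / x) := by rw [gaussMap, if_neg hne, Int.fract]
  have hirr : Irrational (gaussMap x) := by rw [heq, Int.fract]; exact Irrational.sub_intCast hinv _
  refine ⟨hirr, ?_, ?_⟩
  · rw [heq]; exact Int.fract_pos.mpr (fun h => hinv.ne_int _ h)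
  · rw [heq]; exact Int.fract_lt_one _

lemma gauss_iter {β : ℝ} (hβ : Irrational β) (h0 : 0 < β) (h1 : β < 1) (k : ℕ) :
    Irrational (gaussMap^[k] β) ∧ 0 < gaussMap^[k] β ∧ gaussMap^[k] β < 1 := by
  induction k with
  | zero => exact ⟨hβ, h0, h1⟩
  | succ k ih =>
      rw [Function.iterate_succ_apply']
      exact gauss_step ih.1 ih.2.1

lemma cfa_one_le {β : ℝ} (hβ : Irrational β) (h0 : 0 < β) (h1 : β < 1) (k : ℕ) :
    1 ≤ cfa β k := by
  obtain ⟨hi, hp, hl⟩ := gauss_iter hβ h0 h1 k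
  have : (1:ℝ) ≤ 1 / gaussMap^[k] β := by
    rw [le_div_iff₀ hp]; linarith
  exact Int.le_floor.mpr (by exact_mod_cast this)

lemma cfa_bounds {β : ℝ} (hβ : Irrational β) (h0 : 0 < β) (h1 : β < 1) (k : ℕ) :
    (cfa β k : ℝ) * gaussMap^[k] β + gaussMap^[k] β > 1 := by
  obtain ⟨hi, hp, hl⟩ := gauss_iter hβ h0 h1 k
  have h := Int.lt_floor_add_one (1 / gaussMap^[k] β)
  have := mul_lt_mul_of_pos_right h hp
  rw [one_div_mul_cancel (ne_of_gt hp)] at this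
  calc (1:ℝ) < ((cfa β k : ℝ) + 1) * gaussMap^[k] β := this
    _ = (cfa β k : ℝ) * gaussMap^[k] β + gaussMap^[k] β := by ring

lemma qDen_facts {β : ℝ} (hβ : Irrational β) (h0 : 0 < β) (h1 : β < 1) (k : ℕ) :
    0 ≤ qDen β k ∧ 1 ≤ qDen β (k + 1) ∧ qDen β k ≤ qDen β (k + 1) := by
  induction k with
  | zero => simp [qDen]
  | succ k ih =>
      obtain ⟨h0', h1', h2'⟩ := ih
      have ha := cfa_one_le hβ h0 h1 k
      refine ⟨by linarith, ?_, ?_⟩ <;>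
        · show _ ≤ cfa β k * qDen β (k+1) + qDen β k
          nlinarith

lemma beta_eq {β : ℝ} (hβ : Irrational β) (h0 : 0 < β) (h1 : β < 1) (k : ℕ) :
    β * ((qDen β (k+1) : ℝ) + (qDen β k : ℝ) * gaussMap^[k] β) =
      (pNum β (k+1) : ℝ) + (pNum β k : ℝ) * gaussMap^[k] β := by
  induction k with
  | zero => simp [qDen, pNum]
  | succ k ih =>
      obtain ⟨hi, hp, hl⟩ := gauss_iter hβ h0 h1 k
      set x := gaussMap^[k] β with hxdef
      set x' := gaussMap^[k+1] β with hx'def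
      have hx' : x' = 1 / x - (cfa β k : ℝ) := by
        rw [hx'def, Function.iterate_succ_apply', ← hxdef, gaussMap, if_neg (ne_of_gt hp)]
        rfl
      have key : x * ((cfa β k : ℝ) + x') = 1 := by
        rw [hx']; field_simp; ring
      show β * ((↑(cfa β k * qDen β (k+1) + qDen β k) : ℝ) + (qDen β (k+1) : ℝ) * x')
          = (↑(cfa β k * pNum β (k+1) + pNum β k) : ℝ) + (pNum β (k+1) : ℝ) * x'
      push_cast
      linear_combination ((cfa β k : ℝ) + x') * ih +
        (-(β * (qDen β k : ℝ) - (pNum β k : ℝ))) * key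

lemma det_eq (β : ℝ) (k : ℕ) :
    (pNum β (k+1) : ℝ) * (qDen β k : ℝ) - (pNum β k : ℝ) * (qDen β (k+1) : ℝ)
      = (-1) ^ (k+1) := by
  induction k with
  | zero => simp [pNum, qDen]
  | succ k ih =>
      show (↑(cfa β k * pNum β (k+1) + pNum β k) : ℝ) * _ -
        _ * (↑(cfa β k * qDen β (k+1) + qDen β k) : ℝ) = _
      push_cast
      rw [pow_succ]
      linear_combination (-1 : ℝ) * ih


set_option maxHeartbeats 1600000 in
/-- For irrational `β ∈ (0,1)` and `n ≥ 1`, the intersection point `y_n` of the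
vertical geodesic at `β` with the semicircular geodesic with endpoints
`p_{n-1}/q_{n-1}` and `p_n/q_n` — whose imaginary part is
`√(r² − (β − c)²)` with `c = (p_{n-1}/q_{n-1} + p_n/q_n)/2` and
`r = 1/(2 q_{n-1} q_n)` — satisfies
`1/(2 q_n q_{n+1}) < Im y_n < 1/(2 q_{n-1} q_n)`. -/
theorem im_intersection_bounds (β : ℝ) (hβ : Irrational β)
    (h0 : 0 < β) (h1 : β < 1) (n : ℕ) (hn : 1 ≤ n) :
    1 / (2 * (qDen β (n + 1) : ℝ) * (qDen β (n + 2) : ℝ)) <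
      Real.sqrt ((1 / (2 * (qDen β n : ℝ) * (qDen β (n + 1) : ℝ))) ^ 2 -
        (β - ((pNum β n : ℝ) / (qDen β n : ℝ) +
          (pNum β (n + 1) : ℝ) / (qDen β (n + 1) : ℝ)) / 2) ^ 2) ∧
    Real.sqrt ((1 / (2 * (qDen β n : ℝ) * (qDen β (n + 1) : ℝ))) ^ 2 -
        (β - ((pNum β n : ℝ) / (qDen β n : ℝ) +
          (pNum β (n + 1) : ℝ) / (qDen β (n + 1) : ℝ)) / 2) ^ 2) <
      1 / (2 * (qDen β n : ℝ) * (qDen β (n + 1) : ℝ)) := by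
  obtain ⟨hi, hp, hl⟩ := gauss_iter hβ h0 h1 n
  obtain ⟨m, rfl⟩ : ∃ m, n = m + 1 := ⟨n - 1, (Nat.succ_pred_eq_of_pos hn).symm⟩
  set n := m + 1 with hndef
  set x : ℝ := gaussMap^[n] β with hxdef
  set a : ℝ := (cfa β n : ℝ) with hadef
  set q1 : ℝ := (qDen β n : ℝ) with hq1def
  set q2 : ℝ := (qDen β (n+1) : ℝ) with hq2def
  set q3 : ℝ := (qDen β (n+2) : ℝ) with hq3def
  set p1 : ℝ := (pNum β n : ℝ) with hp1def
  set p2 : ℝ := (pNum β (n+1) : ℝ) with hp2def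
  have hq1 : 1 ≤ q1 := by
    have := (qDen_facts hβ h0 h1 m).2.1; rw [hq1def]; exact_mod_cast this
  have hq12 : q1 ≤ q2 := by
    have := (qDen_facts hβ h0 h1 n).2.2; rw [hq1def, hq2def]; exact_mod_cast this
  have hq2pos : 1 ≤ q2 := le_trans hq1 hq12
  have hq23 : q2 ≤ q3 := by
    have := (qDen_facts hβ h0 h1 (n+1)).2.2; rw [hq2def, hq3def]; exact_mod_cast this
  have hq3pos : 1 ≤ q3 := le_trans hq2pos hq23
  have ha : 1 ≤ a := by
    have := cfa_one_le hβ h0 h1 n; rw [hadef]; exact_mod_cast this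
  have hax : a * x + x > 1 := cfa_bounds hβ h0 h1 n
  have hq3e : q3 = a * q2 + q1 := by
    rw [hq3def, hadef, hq2def, hq1def]
    show ((cfa β n * qDen β (n+1) + qDen β n : ℤ) : ℝ) = _
    push_cast; ring
  have hbe : β * (q2 + q1 * x) = p2 + p1 * x := beta_eq hβ h0 h1 n
  set e : ℝ := (-1 : ℝ) ^ (n + 1) with hedef
  have hdet : p2 * q1 - p1 * q2 = e := det_eq β n
  have he2 : e ^ 2 = 1 := by
    rw [hedef, ← pow_mul, mul_comm, pow_mul]; norm_num
  set D : ℝ := q2 + q1 * x with hDdef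
  have hD0 : 0 < D := by nlinarith
  have hq10 : q1 ≠ 0 := by positivity
  have hq20 : q2 ≠ 0 := by positivity
  have hu : β * (q1 * D) = p1 * D + e := by
    rw [hDdef]; linear_combination q1 * hbe + hdet
  have hv : β * (q2 * D) = p2 * D - e * x := by
    rw [hDdef]; linear_combination q2 * hbe - x * hdet
  have hDne : D ≠ 0 := hD0.ne'
  have hA : p1 / q1 = β - e / (q1 * D) := by
    rw [eq_sub_iff_add_eq, div_add_div _ _ hq10 (mul_ne_zero hq10 hDne),
      div_eq_iff (mul_ne_zero hq10 (mul_ne_zero hq10 hDne))]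
    linear_combination (-q1) * hu
  have hB : p2 / q2 = β + e * x / (q2 * D) := by
    field_simp
    linear_combination (-1) * hv
  have hc : β - (p1 / q1 + p2 / q2) / 2 = e * (q2 - q1 * x) / (2 * q1 * q2 * D) := by
    rw [hA, hB]
    field_simp
    ring
  have hsq : (e * (q2 - q1 * x) / (2 * q1 * q2 * D)) ^ 2
      = (q2 - q1 * x) ^ 2 / (4 * q1 ^ 2 * q2 ^ 2 * D ^ 2) := by
    rw [div_pow, mul_pow, he2, one_mul]; ring
  have hE : (1 / (2 * q1 * q2)) ^ 2 - (β - (p1 / q1 + p2 / q2) / 2) ^ 2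
      = x / (q1 * q2 * D ^ 2) := by
    rw [hc, hsq, hDdef]
    field_simp
    ring
  rw [hE]
  have hirr_ne : q1 * x ≠ q2 := by
    intro h
    apply hi
    refine ⟨(qDen β (n+1) : ℚ) / (qDen β n : ℚ), ?_⟩
    push_cast
    rw [← hq1def, ← hq2def, eq_comm, eq_div_iff hq10]
    linarith [h]
  clear_value x a q1 q2 q3 p1 p2 e D
  clear hA hB hc hsq hE hu hv hbe hdet he2 hxdef hadef hq1def hq2def hq3def hp1def hp2def hedef hβ h0 h1 hi hn hndef
  clear n
  constructor
  · rw [Real.lt_sqrt (by positivity)]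
    have h5 : 0 < q2 * (a * x + x - 1) := mul_pos (by linarith) (by linarith)
    have h5' : (q2 + q3) * x - D = q2 * (a * x + x - 1) := by rw [hDdef, hq3e]; ring
    have h6 : q2 * x ≤ q3 * x := mul_le_mul_of_nonneg_right hq23 hp.le
    have hDlt2 : D < 2 * q3 * x := by linarith
    have hD2 : D ^ 2 < 4 * q3 ^ 2 * x ^ 2 := by
      nlinarith [mul_self_lt_mul_self hD0.le hDlt2]
    have key2 : q1 * q2 * D ^ 2 < x * (4 * q2 ^ 2 * q3 ^ 2) := by
      have c1 : q1 * q2 * D ^ 2 < q1 * q2 * (4 * q3 ^ 2 * x ^ 2) := by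
        apply mul_lt_mul_of_pos_left hD2 (by positivity)
      have c2 : q1 * q2 * (4 * q3 ^ 2 * x ^ 2) ≤ q2 * q2 * (4 * q3 ^ 2 * x ^ 2) := by
        apply mul_le_mul_of_nonneg_right (by nlinarith) (by positivity)
      have c3 : q2 * q2 * (4 * q3 ^ 2 * x ^ 2) < x * (4 * q2 ^ 2 * q3 ^ 2) := by
        have hsq2 : (0:ℝ) < q2 ^ 2 := by nlinarith
        have hsq3 : (0:ℝ) < q3 ^ 2 := by nlinarith
        nlinarith [mul_pos (mul_pos hsq2 hsq3) (mul_pos hp (show (0:ℝ) < 1 - x by linarith))]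
      linarith
    calc (1 / (2 * q2 * q3)) ^ 2 = 1 / (4 * q2 ^ 2 * q3 ^ 2) := by
          rw [div_pow]; ring_nf
      _ < x / (q1 * q2 * D ^ 2) := by
          rw [div_lt_div_iff₀ (by positivity) (by positivity)]
          linarith
  · rw [Real.sqrt_lt' (by positivity)]
    have hne : q2 - q1 * x ≠ 0 := fun h => hirr_ne (by linarith)
    have hpos : 0 < (q2 - q1 * x) ^ 2 :=
      lt_of_le_of_ne (sq_nonneg _) (Ne.symm (pow_ne_zero 2 hne))
    have hdiff : (1 / (2 * q1 * q2)) ^ 2 - x / (q1 * q2 * D ^ 2)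
        = (q2 - q1 * x) ^ 2 / (4 * q1 ^ 2 * q2 ^ 2 * D ^ 2) := by
      rw [hDdef]; field_simp; ring
    have hth : 0 < (q2 - q1 * x) ^ 2 / (4 * q1 ^ 2 * q2 ^ 2 * D ^ 2) := by positivity
    linarith [hdiff ▸ hth]
end

section
/- The Gauss–Kuzmin operator is the adjoint of composition with the Gauss map: for all Borel measurable functions f, h : [0,1] → [0,∞], ∫₀¹ (Σ_{k=1}^∞ (x+k)^{−2} f(1/(x+k))) h(x) dx = ∫₀¹ f(x) h(T(x)) dx, where the integrals are with respect to Lebesgue measure. -/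
open MeasureTheory
open scoped ENNReal

/-- One-dimensional change of variables for the lower Lebesgue integral. -/
lemma lintegral_image_eq_lintegral_abs_deriv_mul' {s : Set ℝ} {f : ℝ → ℝ} {f' : ℝ → ℝ}
    (hs : MeasurableSet s) (hf' : ∀ x ∈ s, HasDerivWithinAt f (f' x) s x)
    (hf : Set.InjOn f s) (g : ℝ → ℝ≥0∞) :
    ∫⁻ x in f '' s, g x = ∫⁻ x in s, ENNReal.ofReal |f' x| * g (f x) := by
  simpa only [ContinuousLinearMap.det_toSpanSingleton] using
    lintegral_image_eq_lintegral_abs_det_fderiv_mul volume hs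
      (fun x hx => (hf' x hx).hasFDerivWithinAt) hf g

lemma floor_aux (k : ℕ) {r : ℝ} (h1 : (k : ℝ) + 1 ≤ r) (h2 : r < (k : ℝ) + 2) :
    ⌊r⌋ = (k : ℤ) + 1 := by
  rw [Int.floor_eq_iff]
  constructor <;> push_cast <;> linarith

lemma gm_eq (k : ℕ) {x : ℝ} (hx : x ∈ Set.Ioc (1 / ((k : ℝ) + 2)) (1 / ((k : ℝ) + 1))) :
    gaussMap x = 1 / x - ((k : ℝ) + 1) := by
  obtain ⟨h1, h2⟩ := hx
  have hk2 : (0 : ℝ) < (k : ℝ) + 2 := by positivity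
  have hk1 : (0 : ℝ) < (k : ℝ) + 1 := by positivity
  have hx0 : 0 < x := lt_trans (by positivity) h1
  have hge : (k : ℝ) + 1 ≤ 1 / x := by
    rw [le_div_iff₀ hx0]
    calc ((k : ℝ) + 1) * x ≤ ((k : ℝ) + 1) * (1 / ((k : ℝ) + 1)) := by
          exact mul_le_mul_of_nonneg_left h2 (le_of_lt hk1)
      _ = 1 := by field_simp
  have hlt : 1 / x < (k : ℝ) + 2 := by
    rw [div_lt_iff₀ hx0]
    have h1' : 1 < x * ((k : ℝ) + 2) := (div_lt_iff₀ hk2).mp h1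
    nlinarith
  rw [gaussMap, if_neg (ne_of_gt hx0), floor_aux k hge hlt]
  push_cast; ring

lemma gm_inv_eq (k : ℕ) {y : ℝ} (hy : y ∈ Set.Ico (0 : ℝ) 1) :
    gaussMap (1 / (y + ((k : ℝ) + 1))) = y := by
  obtain ⟨h0, h1⟩ := hy
  have hpos : (0 : ℝ) < y + ((k : ℝ) + 1) := by positivity
  have hne : 1 / (y + ((k : ℝ) + 1)) ≠ 0 := by positivity
  rw [gaussMap, if_neg hne, one_div_one_div]
  have : ⌊y + ((k : ℝ) + 1)⌋ = (k : ℤ) + 1 := floor_aux k (by linarith) (by linarith)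
  rw [this]; push_cast; ring

lemma image_eq (k : ℕ) :
    (fun y : ℝ => 1 / (y + ((k : ℝ) + 1))) '' Set.Ico 0 1
      = Set.Ioc (1 / ((k : ℝ) + 2)) (1 / ((k : ℝ) + 1)) := by
  have hk2 : (0 : ℝ) < (k : ℝ) + 2 := by positivity
  have hk1 : (0 : ℝ) < (k : ℝ) + 1 := by positivity
  ext x
  constructor
  · rintro ⟨y, ⟨h0, h1⟩, rfl⟩
    have hpos : (0 : ℝ) < y + ((k : ℝ) + 1) := by positivity
    constructor
    · apply one_div_lt_one_div_of_lt hpos; linarith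
    · apply one_div_le_one_div_of_le hk1; linarith
  · rintro ⟨h1, h2⟩
    have hx0 : 0 < x := lt_trans (by positivity) h1
    refine ⟨1 / x - ((k : ℝ) + 1), ⟨?_, ?_⟩, ?_⟩
    · have : (k : ℝ) + 1 ≤ 1 / x := by
        rw [le_div_iff₀ hx0]
        calc ((k : ℝ) + 1) * x ≤ ((k : ℝ) + 1) * (1 / ((k : ℝ) + 1)) :=
              mul_le_mul_of_nonneg_left h2 (le_of_lt hk1)
          _ = 1 := by field_simp
      linarith
    · have h1' : 1 < x * ((k : ℝ) + 2) := (div_lt_iff₀ hk2).mp h1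
      have : 1 / x < (k : ℝ) + 2 := by
        rw [div_lt_iff₀ hx0]; nlinarith
      linarith
    · show 1 / (1 / x - ((k:ℝ)+1) + ((k:ℝ)+1)) = x
      rw [sub_add_cancel, one_div_one_div]

lemma iUnion_eq :
    (⋃ k : ℕ, Set.Ioc (1 / ((k : ℝ) + 2)) (1 / ((k : ℝ) + 1))) = Set.Ioc (0 : ℝ) 1 := by
  ext x
  simp only [Set.mem_iUnion, Set.mem_Ioc]
  constructor
  · rintro ⟨k, h1, h2⟩
    have hk1 : (0 : ℝ) < (k : ℝ) + 1 := by positivity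
    refine ⟨lt_trans (by positivity) h1, le_trans h2 ?_⟩
    rw [div_le_one hk1]; linarith
  · rintro ⟨h0, h1⟩
    have hinv : (1 : ℝ) ≤ 1 / x := by rw [le_div_iff₀ h0]; linarith
    set n : ℤ := ⌊1 / x⌋ with hn
    have hn1 : (1 : ℤ) ≤ n := Int.le_floor.mpr (by exact_mod_cast hinv)
    have hnR : (1 : ℝ) ≤ (n : ℝ) := by exact_mod_cast hn1
    have hcast : (((n - 1).toNat : ℝ)) = (n : ℝ) - 1 := by
      have : ((n - 1).toNat : ℤ) = n - 1 := Int.toNat_of_nonneg (by omega)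
      have := congrArg (fun z : ℤ => (z : ℝ)) this
      push_cast at this ⊢
      linarith
    refine ⟨(n - 1).toNat, ?_, ?_⟩
    · rw [hcast]
      have hfl : 1 / x < (n : ℝ) + 1 := Int.lt_floor_add_one _
      have he : ((n : ℝ) - 1) + 2 = (n : ℝ) + 1 := by ring
      rw [he, div_lt_iff₀ (by linarith : (0:ℝ) < (n:ℝ)+1)]
      rw [div_lt_iff₀ h0] at hfl
      nlinarith
    · rw [hcast]
      have hfl : (n : ℝ) ≤ 1 / x := Int.floor_le _
      have he : ((n : ℝ) - 1) + 1 = (n : ℝ) := by ring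
      rw [he, le_div_iff₀ (by linarith : (0:ℝ) < (n:ℝ))]
      rw [le_div_iff₀ h0] at hfl
      nlinarith

/-- The Gauss–Kuzmin operator `(𝓛 f)(x) = ∑_{k≥1} (x+k)⁻² f(1/(x+k))` is the
adjoint of composition with the Gauss map with respect to Lebesgue measure on
`[0,1]`: for all Borel measurable `f, h : [0,1] → [0,∞]`,
`∫₀¹ (𝓛 f)(x) h(x) dx = ∫₀¹ f(x) h(T x) dx`. -/
theorem gaussKuzmin_adjoint (f h : ℝ → ℝ≥0∞) (hf : Measurable f) (hh : Measurable h) :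
    ∫⁻ x in Set.Icc (0 : ℝ) 1,
        (∑' k : ℕ, ENNReal.ofReal (1 / (x + ((k : ℝ) + 1)) ^ 2) *
          f (1 / (x + ((k : ℝ) + 1)))) * h x =
      ∫⁻ x in Set.Icc (0 : ℝ) 1, f x * h (gaussMap x) := by
  -- per-k change of variables
  have key : ∀ k : ℕ,
      ∫⁻ x in Set.Ioc (1 / ((k : ℝ) + 2)) (1 / ((k : ℝ) + 1)), f x * h (gaussMap x)
        = ∫⁻ y in Set.Ico (0 : ℝ) 1,
            ENNReal.ofReal (1 / (y + ((k : ℝ) + 1)) ^ 2) *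
              f (1 / (y + ((k : ℝ) + 1))) * h y := by
    intro k
    have hderiv : ∀ y ∈ Set.Ico (0 : ℝ) 1,
        HasDerivWithinAt (fun y : ℝ => 1 / (y + ((k : ℝ) + 1)))
          (-(1 / (y + ((k : ℝ) + 1)) ^ 2)) (Set.Ico 0 1) y := by
      intro y hy
      have hpos : (0 : ℝ) < y + ((k : ℝ) + 1) := by
        have := hy.1; positivity
      have := ((hasDerivAt_id y).add_const ((k : ℝ) + 1)).inv (ne_of_gt hpos)
      have h2 : (fun y : ℝ => 1 / (y + ((k : ℝ) + 1))) = fun y : ℝ => (y + ((k : ℝ) + 1))⁻¹ := by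
        funext z; rw [one_div]
      rw [h2]
      convert this.hasDerivWithinAt using 1
      · rfl
      · rfl
      · rfl
      · simp only [id]; ring
    have hinj : Set.InjOn (fun y : ℝ => 1 / (y + ((k : ℝ) + 1))) (Set.Ico 0 1) := by
      intro a ha b hb hab
      have hpa : (0 : ℝ) < a + ((k : ℝ) + 1) := by have := ha.1; positivity
      have hpb : (0 : ℝ) < b + ((k : ℝ) + 1) := by have := hb.1; positivity
      field_simp at hab
      linarith
    have := lintegral_image_eq_lintegral_abs_deriv_mul' measurableSet_Ico hderiv hinj
      (fun x => f x * h (gaussMap x))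
    rw [image_eq] at this
    rw [this]
    apply setLIntegral_congr_fun measurableSet_Ico
    intro y hy; dsimp only
    rw [gm_inv_eq k hy, abs_neg, abs_of_nonneg (by positivity), mul_assoc]
  -- RHS
  have hIcc : ∫⁻ x in Set.Icc (0 : ℝ) 1, f x * h (gaussMap x)
      = ∫⁻ x in Set.Ioc (0 : ℝ) 1, f x * h (gaussMap x) :=
    (setLIntegral_congr Ioc_ae_eq_Icc).symm
  have hdisj : Pairwise (Function.onFun Disjoint
      (fun k : ℕ => Set.Ioc (1 / ((k : ℝ) + 2)) (1 / ((k : ℝ) + 1)))) := by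
    have base : ∀ i j : ℕ, i < j → Disjoint
        (Set.Ioc (1 / ((i : ℝ) + 2)) (1 / ((i : ℝ) + 1)))
        (Set.Ioc (1 / ((j : ℝ) + 2)) (1 / ((j : ℝ) + 1))) := by
      intro i j hlt
      rw [Set.Ioc_disjoint_Ioc]
      have hij : (i : ℝ) + 1 ≤ (j : ℝ) := by exact_mod_cast hlt
      have h1 : (1:ℝ) / ((j:ℝ)+1) ≤ 1 / ((i:ℝ)+2) := by
        apply one_div_le_one_div_of_le (by positivity)
        linarith
      calc min (1/((i:ℝ)+1)) (1/((j:ℝ)+1)) ≤ 1/((j:ℝ)+1) := min_le_right _ _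
        _ ≤ 1/((i:ℝ)+2) := h1
        _ ≤ max (1/((i:ℝ)+2)) (1/((j:ℝ)+2)) := le_max_left _ _
    intro i j hij
    rcases lt_or_gt_of_ne hij with hlt | hlt
    · exact base i j hlt
    · exact (base j i hlt).symm
  have hsum : ∫⁻ x in Set.Ioc (0 : ℝ) 1, f x * h (gaussMap x)
      = ∑' k : ℕ, ∫⁻ x in Set.Ioc (1 / ((k : ℝ) + 2)) (1 / ((k : ℝ) + 1)),
          f x * h (gaussMap x) := by
    rw [← iUnion_eq]
    exact lintegral_iUnion (fun k => measurableSet_Ioc) hdisj _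
  -- LHS
  have hmeas : ∀ k : ℕ, Measurable (fun x : ℝ =>
      ENNReal.ofReal (1 / (x + ((k : ℝ) + 1)) ^ 2) * f (1 / (x + ((k : ℝ) + 1))) * h x) := by
    intro k
    apply Measurable.mul _ hh
    apply Measurable.mul
    · apply Measurable.ennreal_ofReal
      apply Measurable.div measurable_const
      exact ((measurable_id.add_const _).pow_const 2)
    · apply hf.comp
      apply Measurable.div measurable_const (measurable_id.add_const _)
  calc ∫⁻ x in Set.Icc (0 : ℝ) 1,
        (∑' k : ℕ, ENNReal.ofReal (1 / (x + ((k : ℝ) + 1)) ^ 2) *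
          f (1 / (x + ((k : ℝ) + 1)))) * h x
      = ∫⁻ x in Set.Icc (0 : ℝ) 1,
          ∑' k : ℕ, ENNReal.ofReal (1 / (x + ((k : ℝ) + 1)) ^ 2) *
            f (1 / (x + ((k : ℝ) + 1))) * h x := by
        congr 1; funext x; rw [← ENNReal.tsum_mul_right]
    _ = ∑' k : ℕ, ∫⁻ x in Set.Icc (0 : ℝ) 1,
          ENNReal.ofReal (1 / (x + ((k : ℝ) + 1)) ^ 2) *
            f (1 / (x + ((k : ℝ) + 1))) * h x :=
        lintegral_tsum (fun k => ((hmeas k).aemeasurable))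
    _ = ∑' k : ℕ, ∫⁻ x in Set.Ico (0 : ℝ) 1,
          ENNReal.ofReal (1 / (x + ((k : ℝ) + 1)) ^ 2) *
            f (1 / (x + ((k : ℝ) + 1))) * h x := by
        congr 1; funext k; exact (setLIntegral_congr Ico_ae_eq_Icc).symm
    _ = ∑' k : ℕ, ∫⁻ x in Set.Ioc (1 / ((k : ℝ) + 2)) (1 / ((k : ℝ) + 1)),
          f x * h (gaussMap x) := by
        congr 1; funext k; exact (key k).symm
    _ = ∫⁻ x in Set.Icc (0 : ℝ) 1, f x * h (gaussMap x) := by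
        rw [hIcc, hsum]
end

section
/- Tail bound for the truncated Gauss–Kuzmin operator: let D̄ = {z ∈ ℂ : |z − 1| ≤ 3/2}. For every k ≥ 1 and x ∈ D̄ one has Re(x + k) ≥ k − 1/2 > 0 and 1/(x+k) ∈ D̄. Moreover, for every σ ∈ ℂ with η = Re σ > 1 there exists a constant C > 0 such that for all integers N ≥ 1 and all bounded functions f : D̄ → ℂ, sup_{x∈D̄} | Σ_{k=N+1}^∞ (x+k)^{−σ} f(1/(x+k)) | ≤ C · N^{1−η} · sup_{z∈D̄} |f(z)|, where (x+k)^{−σ} = exp(−σ · Log(x+k)) with Log the principal branch of the logarithm. -/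
open Real Complex


private lemma gk_re_lb {x : ℂ} (hx : x ∈ Metric.closedBall (1 : ℂ) (3 / 2)) (k : ℕ) :
    (k : ℝ) - 1 / 2 ≤ (x + (k : ℂ)).re := by
  have h : ‖x - 1‖ ≤ 3 / 2 := by
    simpa [Metric.mem_closedBall, Complex.dist_eq] using hx
  have h2 : |(x - 1).re| ≤ 3 / 2 := (Complex.abs_re_le_norm _).trans h
  have := abs_le.1 h2
  simp only [Complex.sub_re, Complex.one_re] at this
  simp only [Complex.add_re, Complex.natCast_re]
  linarith [this.1]

private lemma gk_inv_mem {z : ℂ} (hz : (1:ℝ)/2 ≤ z.re) :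
    1 / z ∈ Metric.closedBall (1 : ℂ) (3 / 2) := by
  have hz0 : z ≠ 0 := by
    intro h; rw [h] at hz; norm_num at hz
  have key : ‖1 - z‖ ≤ ‖z‖ := by
    rw [Complex.norm_def, Complex.norm_def]
    apply Real.sqrt_le_sqrt
    simp only [Complex.normSq_apply, Complex.sub_re, Complex.sub_im, Complex.one_re,
      Complex.one_im]
    nlinarith
  have : ‖1 / z - 1‖ ≤ 1 := by
    have : 1 / z - 1 = (1 - z) / z := by field_simp
    rw [this, norm_div, div_le_one (norm_pos_iff.2 hz0)]
    exact key
  simp only [Metric.mem_closedBall, Complex.dist_eq]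
  linarith

private lemma gk_tail_summable {η : ℝ} (hη : 1 < η) (N : ℕ) :
    Summable (fun j : ℕ => ((N + 1 + j : ℕ) : ℝ) ^ (-η)) := by
  have h : Summable (fun n : ℕ => (n : ℝ) ^ (-η)) :=
    Real.summable_nat_rpow.2 (by linarith)
  exact h.comp_injective (fun a b hab => by omega)

private lemma gk_tail_sum {η : ℝ} (hη : 1 < η) {N : ℕ} (hN : 1 ≤ N) :
    ∑' j : ℕ, ((N + 1 + j : ℕ) : ℝ) ^ (-η) ≤ (N : ℝ) ^ (1 - η) / (η - 1) := by
  have hN0 : (0 : ℝ) < N := by exact_mod_cast hN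
  apply Summable.tsum_le_of_sum_le (gk_tail_summable hη N)
  intro s
  obtain ⟨n, hn⟩ := s.exists_nat_subset_range
  have h1 : ∑ j ∈ s, ((N + 1 + j : ℕ) : ℝ) ^ (-η) ≤
      ∑ j ∈ Finset.range n, ((N + 1 + j : ℕ) : ℝ) ^ (-η) :=
    Finset.sum_le_sum_of_subset_of_nonneg hn (fun i _ _ => by positivity)
  have hanti : AntitoneOn (fun t : ℝ => t ^ (-η)) (Set.Icc (N : ℝ) ((N : ℝ) + n)) := by
    intro a ha b hb hab
    exact Real.rpow_le_rpow_of_nonpos (lt_of_lt_of_le hN0 ha.1) hab (by linarith)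
  have h2 := hanti.sum_le_integral
  have h3 : ∑ j ∈ Finset.range n, ((N + 1 + j : ℕ) : ℝ) ^ (-η) =
      ∑ i ∈ Finset.range n, ((N : ℝ) + ((i + 1 : ℕ) : ℝ)) ^ (-η) := by
    apply Finset.sum_congr rfl
    intro i _
    push_cast
    ring_nf
  have h4 : (∫ x in (N : ℝ)..((N : ℝ) + n), x ^ (-η)) ≤ (N : ℝ) ^ (1 - η) / (η - 1) := by
    rw [integral_rpow (Or.inr ⟨by linarith, by
      rw [Set.uIcc_of_le (le_add_of_nonneg_right (Nat.cast_nonneg n))]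
      intro h
      exact absurd (Set.mem_Icc.1 h).1 (by linarith)⟩)]
    rw [show (-η + 1 : ℝ) = 1 - η by ring]
    have hpos : (0 : ℝ) ≤ ((N : ℝ) + n) ^ (1 - η) := by positivity
    have key : (((N:ℝ)+n)^(1-η) - (N:ℝ)^(1-η))/(1-η) =
        ((N:ℝ)^(1-η) - ((N:ℝ)+n)^(1-η))/(η-1) := by
      have e1 : (1:ℝ) - η ≠ 0 := by linarith
      have e2 : (η:ℝ) - 1 ≠ 0 := by linarith
      field_simp
      ring
    rw [key]
    gcongr
    · linarith
  calc ∑ j ∈ s, ((N + 1 + j : ℕ) : ℝ) ^ (-η) ≤ _ := h1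
    _ = _ := h3
    _ ≤ _ := h2
    _ ≤ _ := h4

private lemma gk_term_bound {σ : ℂ} (hσ : 1 < σ.re) {x : ℂ}
    (hx : x ∈ Metric.closedBall (1 : ℂ) (3 / 2)) {k : ℕ} (hk : 1 ≤ k) :
    ‖(x + (k : ℂ)) ^ (-σ)‖ ≤
      Real.exp (π * |σ.im|) * ((2:ℝ) ^ σ.re * (k : ℝ) ^ (-σ.re)) := by
  set z := x + (k : ℂ) with hzdef
  have hk1 : (1 : ℝ) ≤ (k : ℝ) := by exact_mod_cast hk
  have hre : (k : ℝ) - 1 / 2 ≤ z.re := gk_re_lb hx k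
  have hhalf : (k : ℝ) / 2 ≤ ‖z‖ :=
    le_trans (by linarith : (k : ℝ) / 2 ≤ z.re) (Complex.re_le_norm z)
  have hkpos : (0 : ℝ) < (k : ℝ) / 2 := by linarith
  have h1 : ‖z ^ (-σ)‖ ≤
      ‖z‖ ^ (-σ.re) * Real.exp (Complex.arg z * σ.im) := by
    have h := Complex.norm_cpow_le z (-σ)
    simp only [Complex.neg_re, Complex.neg_im] at h
    rwa [div_eq_mul_inv, ← Real.exp_neg, mul_neg, neg_neg] at h
  have h2 : Real.exp (Complex.arg z * σ.im) ≤ Real.exp (π * |σ.im|) := by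
    apply Real.exp_le_exp.2
    calc Complex.arg z * σ.im ≤ |Complex.arg z * σ.im| := le_abs_self _
      _ = |Complex.arg z| * |σ.im| := abs_mul _ _
      _ ≤ π * |σ.im| :=
        mul_le_mul_of_nonneg_right (Complex.abs_arg_le_pi z) (abs_nonneg _)
  have h3 : ‖z‖ ^ (-σ.re) ≤ ((k : ℝ) / 2) ^ (-σ.re) :=
    Real.rpow_le_rpow_of_nonpos hkpos hhalf (by linarith)
  have h4 : ((k : ℝ) / 2) ^ (-σ.re) = (2:ℝ) ^ σ.re * (k : ℝ) ^ (-σ.re) := by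
    rw [Real.div_rpow (by linarith) (by norm_num)]
    rw [Real.rpow_neg (by norm_num : (0:ℝ) ≤ 2)]
    field_simp
  calc ‖z ^ (-σ)‖ = ‖z ^ (-σ)‖ := rfl
    _ ≤ ‖z‖ ^ (-σ.re) * Real.exp (Complex.arg z * σ.im) := h1
    _ ≤ ((k : ℝ) / 2) ^ (-σ.re) * Real.exp (π * |σ.im|) := by
        apply mul_le_mul h3 h2 (Real.exp_pos _).le (by positivity)
    _ = Real.exp (π * |σ.im|) * ((2:ℝ) ^ σ.re * (k : ℝ) ^ (-σ.re)) := by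
        rw [h4]; ring


/-- Tail bound for the truncated Gauss–Kuzmin operator on the disk
`D̄ = {z : |z − 1| ≤ 3/2}`: for `k ≥ 1` and `x ∈ D̄` one has
`Re(x + k) ≥ k − 1/2 > 0` and `1/(x+k) ∈ D̄`; and for `Re σ = η > 1` there is
`C > 0` such that for all `N ≥ 1` and all `f` bounded by `M` on `D̄`,
`‖∑_{k>N} (x+k)^{−σ} f(1/(x+k))‖ ≤ C N^{1−η} M` on `D̄` (here `(x+k)^{−σ}` is
`exp(−σ Log(x+k))` with the principal logarithm, i.e. the principal power). -/
theorem truncated_gaussKuzmin_tail_bound :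
    (∀ k : ℕ, 1 ≤ k → ∀ x ∈ Metric.closedBall (1 : ℂ) (3 / 2),
      ((k : ℝ) - 1 / 2 ≤ (x + (k : ℂ)).re ∧ 0 < (k : ℝ) - 1 / 2) ∧
      1 / (x + (k : ℂ)) ∈ Metric.closedBall (1 : ℂ) (3 / 2)) ∧
    (∀ σ : ℂ, 1 < σ.re → ∃ C : ℝ, 0 < C ∧
      ∀ N : ℕ, 1 ≤ N → ∀ f : ℂ → ℂ, ∀ M : ℝ,
        (∀ z ∈ Metric.closedBall (1 : ℂ) (3 / 2), ‖f z‖ ≤ M) →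
        ∀ x ∈ Metric.closedBall (1 : ℂ) (3 / 2),
          ‖∑' k : ℕ, (x + ((N + 1 + k : ℕ) : ℂ)) ^ (-σ) *
              f (1 / (x + ((N + 1 + k : ℕ) : ℂ)))‖ ≤
            C * (N : ℝ) ^ (1 - σ.re) * M) := by
  constructor
  · intro k hk x hx
    have hre := gk_re_lb hx k
    have hk1 : (1 : ℝ) ≤ (k : ℝ) := by exact_mod_cast hk
    exact ⟨⟨hre, by linarith⟩, gk_inv_mem (by linarith)⟩
  · intro σ hσ
    refine ⟨Real.exp (π * |σ.im|) * (2:ℝ) ^ σ.re / (σ.re - 1),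
      div_pos (by positivity) (by linarith), ?_⟩
    intro N hN f M hM x hx
    have hM0 : 0 ≤ M :=
      le_trans (norm_nonneg _) (hM 1 (Metric.mem_closedBall_self (by norm_num)))
    set g : ℕ → ℝ :=
      fun j => Real.exp (π * |σ.im|) * (2:ℝ) ^ σ.re * M * ((N + 1 + j : ℕ) : ℝ) ^ (-σ.re)
      with hg
    set F : ℕ → ℂ :=
      fun j => (x + ((N + 1 + j : ℕ) : ℂ)) ^ (-σ) * f (1 / (x + ((N + 1 + j : ℕ) : ℂ)))
      with hF
    have hterm : ∀ j : ℕ, ‖F j‖ ≤ g j := by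
      intro j
      have hk : 1 ≤ N + 1 + j := by omega
      have hk1 : (1 : ℝ) ≤ ((N + 1 + j : ℕ) : ℝ) := by exact_mod_cast hk
      have hb := gk_term_bound hσ hx hk
      have hmem : 1 / (x + ((N + 1 + j : ℕ) : ℂ)) ∈ Metric.closedBall (1 : ℂ) (3 / 2) := by
        apply gk_inv_mem
        have := gk_re_lb hx (N + 1 + j)
        linarith
      have hf := hM _ hmem
      rw [hF, norm_mul]
      calc ‖(x + ((N + 1 + j : ℕ) : ℂ)) ^ (-σ)‖ * ‖f (1 / (x + ((N + 1 + j : ℕ) : ℂ)))‖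
          ≤ (Real.exp (π * |σ.im|) * ((2:ℝ) ^ σ.re * ((N + 1 + j : ℕ) : ℝ) ^ (-σ.re))) * M :=
            mul_le_mul hb hf (norm_nonneg _) (by positivity)
        _ = g j := by rw [hg]; ring
    have hgsum : Summable g := by
      apply (gk_tail_summable hσ N).mul_left
    have hnsum : Summable (fun j => ‖F j‖) :=
      Summable.of_nonneg_of_le (fun j => norm_nonneg _) hterm hgsum
    calc ‖∑' j : ℕ, F j‖ ≤ ∑' j : ℕ, ‖F j‖ := norm_tsum_le_tsum_norm hnsum
      _ ≤ ∑' j : ℕ, g j := Summable.tsum_le_tsum hterm hnsum hgsum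
      _ = Real.exp (π * |σ.im|) * (2:ℝ) ^ σ.re * M *
          ∑' j : ℕ, ((N + 1 + j : ℕ) : ℝ) ^ (-σ.re) := tsum_mul_left
      _ ≤ Real.exp (π * |σ.im|) * (2:ℝ) ^ σ.re * M *
          ((N : ℝ) ^ (1 - σ.re) / (σ.re - 1)) := by
            apply mul_le_mul_of_nonneg_left (gk_tail_sum hσ hN) (by positivity)
      _ = Real.exp (π * |σ.im|) * (2:ℝ) ^ σ.re / (σ.re - 1) * (N : ℝ) ^ (1 - σ.re) * M := by
            ring
end
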